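/- Let f ∈ L¹[-π,π] with ∫_{-π}^{π} f dx = 0, extended 2π-periodically, and let K(x) = (1/2)x² − π|x| + (1/3)π² (also extended 2π-periodically). Define u = K * f, i.e. u(x) = (1/(2π))∫_{-π}^{π} K(x−y)f(y) dy. Then u is continuously differentiable with u' = K' * f, u' is absolutely continuous on [-π,π] with −u'' = f a.e., u'(−π) = u'(π) = −(1/(2π))∫_{-π}^{π} x f(x) dx, and ∫_{-π}^{π} u dx = 0. -/

import Mathlib

open Real MeasureTheory Set Topology Filter

noncomputable section

/-- The `2π`-periodic extension of the Neumann kernel `K(x) = (1/2)x² - π|x| + π²/3`. -/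
def Kper (z : ℝ) : ℝ :=
  (1/2) * (toIocMod Real.two_pi_pos (-π) z)^2
    - π * |toIocMod Real.two_pi_pos (-π) z| + π^2 / 3

/-- The `2π`-periodic extension of `K'`, where `K'(x) = x - π·sgn x` on `(-π,π)`. -/
def Kper' (z : ℝ) : ℝ :=
  toIocMod Real.two_pi_pos (-π) z - π * Real.sign (toIocMod Real.two_pi_pos (-π) z)

namespace NeumannAux

lemma ae_ne (x : ℝ) : ∀ᵐ t : ℝ, t ≠ x := by
  rw [ae_iff]
  have h : {a : ℝ | ¬a ≠ x} = {x} := by ext t; simp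
  rw [h]
  exact measure_singleton x

lemma toIoc_shift (d : ℝ) (k : ℤ) (h1 : -π < d - 2*π*k) (h2 : d - 2*π*k ≤ π) :
    toIocMod Real.two_pi_pos (-π) d = d - 2*π*k := by
  rw [toIocMod_eq_iff]
  refine ⟨⟨h1, by linarith⟩, k, ?_⟩
  push_cast [zsmul_eq_mul]
  ring

lemma toIoc_self (d : ℝ) (h1 : -π < d) (h2 : d ≤ π) :
    toIocMod Real.two_pi_pos (-π) d = d := by
  have := toIoc_shift d 0 (by push_cast; linarith) (by push_cast; linarith)
  simpa using this

lemma mem_Ioc' (z : ℝ) : toIocMod Real.two_pi_pos (-π) z ∈ Ioc (-π) π := by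
  have := toIocMod_mem_Ioc Real.two_pi_pos (-π) z
  rwa [show -π + 2*π = π by ring] at this

lemma abs_sign_le (r : ℝ) : |Real.sign r| ≤ 1 := by
  rcases Real.sign_apply_eq r with h | h | h <;> rw [h] <;> norm_num

lemma Kper'_bound (z : ℝ) : |Kper' z| ≤ 2*π := by
  obtain ⟨h1, h2⟩ := mem_Ioc' z
  set r := toIocMod Real.two_pi_pos (-π) z
  have habs : |r| ≤ π := abs_le.2 ⟨h1.le, h2⟩
  have hs : |π * Real.sign r| ≤ π := by
    rw [abs_mul, abs_of_pos Real.pi_pos]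
    nlinarith [abs_sign_le r, Real.pi_pos]
  calc |r - π * Real.sign r| ≤ |r| + |π * Real.sign r| := abs_sub _ _
    _ ≤ 2*π := by linarith

lemma Kper_bound (z : ℝ) : |Kper z| ≤ 2*π^2 := by
  obtain ⟨h1, h2⟩ := mem_Ioc' z
  set r := toIocMod Real.two_pi_pos (-π) z
  have habs : |r| ≤ π := abs_le.2 ⟨h1.le, h2⟩
  have hr2 : r^2 ≤ π^2 := sq_le_sq' (by linarith) h2
  have habs0 : 0 ≤ |r| := abs_nonneg r
  have hmul : π * |r| ≤ π * π := mul_le_mul_of_nonneg_left habs Real.pi_pos.le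
  rw [abs_le]
  unfold r at *
  unfold Kper
  constructor <;> nlinarith [Real.pi_pos, sq_nonneg (toIocMod Real.two_pi_pos (-π) z)]

lemma measurable_toIoc : Measurable (fun z : ℝ => toIocMod Real.two_pi_pos (-π) z) := by
  have h : (fun z : ℝ => toIocMod Real.two_pi_pos (-π) z)
      = fun z : ℝ => z - ((-⌊(-π + 2*π - z)/(2*π)⌋ : ℤ) : ℝ) * (2*π) := by
    funext z
    rw [toIocMod, toIocDiv_eq_neg_floor]
    push_cast [zsmul_eq_mul]
    ring
  rw [h]
  have hm : Measurable fun z : ℝ => ((-⌊(-π + 2*π - z)/(2*π)⌋ : ℤ) : ℝ) :=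
    (measurable_from_top (f := fun n : ℤ => ((-n : ℤ) : ℝ))).comp
      ((measurable_const.sub measurable_id).div_const _).floor
  exact measurable_id.sub (hm.mul_const _)

lemma measurable_sign : Measurable Real.sign := by
  have h : Real.sign = fun r : ℝ => if r < 0 then (-1:ℝ) else if 0 < r then 1 else 0 := by
    funext r; rfl
  rw [h]
  exact Measurable.ite measurableSet_Iio measurable_const
    (Measurable.ite measurableSet_Ioi measurable_const measurable_const)

lemma measurable_Kper' : Measurable Kper' :=
  measurable_toIoc.sub ((measurable_sign.comp measurable_toIoc).const_mul π)

lemma measurable_Kper : Measurable Kper :=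
  (((measurable_toIoc.pow_const 2).const_mul _).sub
    (measurable_toIoc.abs.const_mul _)).add_const _

lemma Kper_periodic : Function.Periodic Kper (2*π) := fun x => by
  unfold Kper; rw [toIocMod_add_right]

lemma Kper'_periodic : Function.Periodic Kper' (2*π) := fun x => by
  unfold Kper'; rw [toIocMod_add_right]

end NeumannAux
namespace NeumannAux

lemma sign_eq_signType (r : ℝ) (h : r ≠ 0) : ((SignType.sign r : ℝ)) = Real.sign r := by
  rcases lt_or_gt_of_ne h with hr | hr
  · simp [Real.sign_of_neg hr, hr]
  · simp [Real.sign_of_pos hr, hr]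

lemma hasDerivAt_Kper (t : ℝ) (h0 : toIocMod Real.two_pi_pos (-π) t ≠ 0)
    (h1 : toIocMod Real.two_pi_pos (-π) t ≠ π) : HasDerivAt Kper (Kper' t) t := by
  set r := toIocMod Real.two_pi_pos (-π) t with hrdef
  obtain ⟨hm1, hm2⟩ := mem_Ioc' t
  set c : ℝ := t - r with hc
  have hr : t - c = r := by rw [hc]; ring
  obtain ⟨k, hk⟩ : ∃ k : ℤ, c = 2*π*k := by
    refine ⟨toIocDiv Real.two_pi_pos (-π) t, ?_⟩
    rw [hc, hrdef, toIocMod]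
    push_cast [zsmul_eq_mul]
    ring
  have hev : ∀ᶠ z in 𝓝 t, Kper z = (1/2)*(z - c)^2 - π * |z - c| + π^2/3 := by
    have hopen : IsOpen {z : ℝ | z - c ∈ Ioo (-π) π} :=
      isOpen_Ioo.preimage (continuous_id.sub continuous_const)
    have hmem' : t ∈ {z : ℝ | z - c ∈ Ioo (-π) π} := by
      simp only [mem_setOf_eq, hr]
      exact ⟨hm1, lt_of_le_of_ne hm2 h1⟩
    filter_upwards [hopen.mem_nhds hmem'] with z hz
    have hz' : toIocMod Real.two_pi_pos (-π) z = z - c := by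
      rw [hk]
      exact toIoc_shift z k (by rw [← hk]; exact hz.1) (by rw [← hk]; exact hz.2.le)
    unfold Kper
    rw [hz']
  have h₁ : HasDerivAt (fun z : ℝ => z - c) 1 t := (hasDerivAt_id t).sub_const c
  have h₂ : HasDerivAt (fun z : ℝ => (1/2)*(z-c)^2) r t := by
    have := (h₁.pow 2).const_mul (1/2 : ℝ)
    refine this.congr_deriv ?_
    rw [hr]; push_cast; ring
  have h₃ : HasDerivAt (fun z : ℝ => |z - c|) (Real.sign r) t := by
    have habs := (hasDerivAt_abs (x := t - c) (by rw [hr]; exact h0)).comp t h₁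
    refine habs.congr_deriv ?_
    rw [hr, mul_one, sign_eq_signType r h0]
  have hd : HasDerivAt (fun z : ℝ => (1/2)*(z - c)^2 - π * |z - c| + π^2/3)
      (r - π * Real.sign r) t := (h₂.sub (h₃.const_mul π)).add_const _
  exact (hd.congr_of_eventuallyEq hev : HasDerivAt Kper _ t)

lemma Kper'_ii (a b : ℝ) : IntervalIntegrable Kper' volume a b := by
  rw [intervalIntegrable_iff]
  have hconst : IntegrableOn (fun _ : ℝ => 2*π) (uIoc a b) :=
    integrableOn_const measure_Ioc_lt_top.ne
  exact hconst.mono' measurable_Kper'.aestronglyMeasurable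
    (Filter.Eventually.of_forall fun x => by
      rw [Real.norm_eq_abs]; exact Kper'_bound x)

lemma Kper_ii (a b : ℝ) : IntervalIntegrable Kper volume a b := by
  rw [intervalIntegrable_iff]
  have hconst : IntegrableOn (fun _ : ℝ => 2*π^2) (uIoc a b) :=
    integrableOn_const measure_Ioc_lt_top.ne
  exact hconst.mono' measurable_Kper.aestronglyMeasurable
    (Filter.Eventually.of_forall fun x => by
      rw [Real.norm_eq_abs]; exact Kper_bound x)

lemma FTC_even (m : ℤ) (a b : ℝ) (ha : 2*π*m ≤ a) (hab : a ≤ b) (hb : b ≤ 2*π*m + π) :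
    ∫ t in a..b, Kper' t = Kper b - Kper a := by
  set c : ℝ := 2*π*m with hc
  have hKper : ∀ x, c ≤ x → x ≤ c + π → Kper x = (1/2)*(x-c)^2 - π*(x-c) + π^2/3 := by
    intro x h1 h2
    have ht : toIocMod Real.two_pi_pos (-π) x = x - c :=
      toIoc_shift x m (by rw [← hc]; nlinarith [Real.pi_pos]) (by rw [← hc]; linarith)
    unfold Kper
    rw [ht, abs_of_nonneg (by linarith)]
  have hKper' : ∀ x ∈ Ioo a b, Kper' x = x - c - π := by
    intro x hx
    have h1 : c < x := lt_of_le_of_lt ha hx.1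
    have h2 : x < c + π := lt_of_lt_of_le hx.2 hb
    have ht : toIocMod Real.two_pi_pos (-π) x = x - c :=
      toIoc_shift x m (by rw [← hc]; nlinarith [Real.pi_pos]) (by rw [← hc]; linarith)
    unfold Kper'
    rw [ht, Real.sign_of_pos (by linarith)]
    ring
  have hP : ∀ x ∈ uIcc a b, HasDerivAt (fun x : ℝ => (1/2)*(x-c)^2 - π*(x-c) + π^2/3)
      (x - c - π) x := by
    intro x _
    have h₁ : HasDerivAt (fun z : ℝ => z - c) 1 x := (hasDerivAt_id x).sub_const c
    have h₂ := ((h₁.pow 2).const_mul (1/2 : ℝ)).sub (h₁.const_mul π)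
    have h₃ := h₂.add_const (π^2/3)
    refine h₃.congr_deriv ?_
    push_cast; ring
  have hcont : Continuous (fun x : ℝ => x - c - π) := by continuity
  calc ∫ t in a..b, Kper' t = ∫ t in a..b, (t - c - π) := by
        apply intervalIntegral.integral_congr_ae
        filter_upwards [ae_ne b] with t htb ht
        rw [uIoc_of_le hab] at ht
        exact hKper' t ⟨ht.1, lt_of_le_of_ne ht.2 htb⟩
    _ = ((1/2)*(b-c)^2 - π*(b-c) + π^2/3) - ((1/2)*(a-c)^2 - π*(a-c) + π^2/3) :=
        intervalIntegral.integral_eq_sub_of_hasDerivAt hP (hcont.intervalIntegrable _ _)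
    _ = Kper b - Kper a := by
        rw [hKper b (le_trans ha hab) hb, hKper a ha (le_trans hab hb)]

lemma FTC_odd (m : ℤ) (a b : ℝ) (ha : 2*π*m + π ≤ a) (hab : a ≤ b) (hb : b ≤ 2*π*m + 2*π) :
    ∫ t in a..b, Kper' t = Kper b - Kper a := by
  set c : ℝ := 2*π*m with hc
  have hKper : ∀ x, c + π ≤ x → x ≤ c + 2*π →
      Kper x = (1/2)*(x-c-2*π)^2 + π*(x-c-2*π) + π^2/3 := by
    intro x h1 h2
    rcases eq_or_lt_of_le h1 with heq | hlt
    · have ht : toIocMod Real.two_pi_pos (-π) x = π := by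
        have := toIoc_shift x m (by rw [← hc]; nlinarith [Real.pi_pos]) (by rw [← hc]; linarith)
        rw [this, ← hc, ← heq]; ring
      unfold Kper
      rw [ht, abs_of_pos Real.pi_pos, ← heq]
      ring
    · have ht : toIocMod Real.two_pi_pos (-π) x = x - c - 2*π := by
        have := toIoc_shift x (m+1) (by push_cast; nlinarith [Real.pi_pos, hc])
          (by push_cast; nlinarith [Real.pi_pos, hc])
        rw [this, hc]; push_cast; ring
      unfold Kper
      rw [ht, abs_of_nonpos (by linarith)]
      ring
  have hKper' : ∀ x ∈ Ioo a b, Kper' x = x - c - π := by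
    intro x hx
    have h1 : c + π < x := lt_of_le_of_lt ha hx.1
    have h2 : x < c + 2*π := lt_of_lt_of_le hx.2 hb
    have ht : toIocMod Real.two_pi_pos (-π) x = x - c - 2*π := by
      have := toIoc_shift x (m+1) (by push_cast; nlinarith [Real.pi_pos, hc])
        (by push_cast; nlinarith [Real.pi_pos, hc])
      rw [this, hc]; push_cast; ring
    unfold Kper'
    rw [ht, Real.sign_of_neg (by linarith)]
    ring
  have hP : ∀ x ∈ uIcc a b, HasDerivAt (fun x : ℝ => (1/2)*(x-c-2*π)^2 + π*(x-c-2*π) + π^2/3)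
      (x - c - π) x := by
    intro x _
    have h₁ : HasDerivAt (fun z : ℝ => z - c - 2*π) 1 x := ((hasDerivAt_id x).sub_const c).sub_const _
    have h₂ := ((h₁.pow 2).const_mul (1/2 : ℝ)).add (h₁.const_mul π)
    have h₃ := h₂.add_const (π^2/3)
    refine h₃.congr_deriv ?_
    push_cast; ring
  have hcont : Continuous (fun x : ℝ => x - c - π) := by continuity
  calc ∫ t in a..b, Kper' t = ∫ t in a..b, (t - c - π) := by
        apply intervalIntegral.integral_congr_ae
        filter_upwards [ae_ne b] with t htb ht
        rw [uIoc_of_le hab] at ht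
        exact hKper' t ⟨ht.1, lt_of_le_of_ne ht.2 htb⟩
    _ = ((1/2)*(b-c-2*π)^2 + π*(b-c-2*π) + π^2/3) - ((1/2)*(a-c-2*π)^2 + π*(a-c-2*π) + π^2/3) :=
        intervalIntegral.integral_eq_sub_of_hasDerivAt hP (hcont.intervalIntegrable _ _)
    _ = Kper b - Kper a := by
        rw [hKper b (le_trans ha hab) hb, hKper a ha (le_trans hab hb)]

lemma FTC_piece (k : ℤ) (a b : ℝ) (ha : k*π ≤ a) (hab : a ≤ b) (hb : b ≤ (k+1)*π) :
    ∫ t in a..b, Kper' t = Kper b - Kper a := by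
  rcases Int.even_or_odd k with ⟨m, hm⟩ | ⟨m, hm⟩
  · apply FTC_even m a b
    · calc (2*π*m : ℝ) = k*π := by rw [hm]; push_cast; ring
        _ ≤ a := ha
    · exact hab
    · calc b ≤ (k+1)*π := hb
        _ = 2*π*m + π := by rw [hm]; push_cast; ring
  · apply FTC_odd m a b
    · calc (2*π*m + π : ℝ) = k*π := by rw [hm]; push_cast; ring
        _ ≤ a := ha
    · exact hab
    · calc b ≤ (k+1)*π := hb
        _ = 2*π*m + 2*π := by rw [hm]; push_cast; ring

lemma FTC_mult (k : ℤ) : ∀ l : ℤ, k ≤ l →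
    ∫ t in (k*π : ℝ)..(l*π : ℝ), Kper' t = Kper (l*π) - Kper (k*π) := by
  refine Int.le_induction ?_ ?_
  · rw [intervalIntegral.integral_same, sub_self]
  · intro l hkl ih
    have hsplit := intervalIntegral.integral_add_adjacent_intervals
      (Kper'_ii (k*π) (l*π)) (Kper'_ii (l*π) ((l+1:ℤ)*π))
    have hpiece : ∫ t in (l*π : ℝ)..((l+1:ℤ)*π : ℝ), Kper' t = Kper ((l+1:ℤ)*π) - Kper (l*π) := by
      apply FTC_piece l
      · exact le_refl _
      · push_cast; nlinarith [Real.pi_pos]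
      · push_cast; exact le_refl _
    rw [← hsplit, ih, hpiece]
    ring

lemma FTC_full (a b : ℝ) : ∫ t in a..b, Kper' t = Kper b - Kper a := by
  have main : ∀ a b : ℝ, a ≤ b → ∫ t in a..b, Kper' t = Kper b - Kper a := by
    intro a b hab
    set k : ℤ := ⌈a/π⌉ with hk
    set l : ℤ := ⌊b/π⌋ with hl
    have hpi := Real.pi_pos
    have hak : a ≤ k*π := by
      rw [hk]
      have := Int.le_ceil (a/π)
      calc a = (a/π)*π := by field_simp
        _ ≤ (⌈a/π⌉:ℝ)*π := by nlinarith
    have hka : (k-1)*π ≤ a := by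
      have := Int.ceil_lt_add_one (a/π)
      rw [hk]
      have h2 : ((⌈a/π⌉:ℝ) - 1) < a/π := by linarith
      calc ((⌈a/π⌉:ℝ)-1)*π ≤ (a/π)*π := by nlinarith
        _ = a := by field_simp
    have hlb : (l:ℝ)*π ≤ b := by
      rw [hl]
      have := Int.floor_le (b/π)
      calc (⌊b/π⌋:ℝ)*π ≤ (b/π)*π := by nlinarith
        _ = b := by field_simp
    have hbl : b ≤ (l+1)*π := by
      rw [hl]
      have := Int.lt_floor_add_one (b/π)
      calc b = (b/π)*π := by field_simp
        _ ≤ ((⌊b/π⌋:ℝ)+1)*π := by nlinarith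
      
    by_cases hc : (k:ℝ)*π ≤ b
    · have hkl : k ≤ l := by
        rw [hk, hl]
        apply Int.le_floor.2
        rw [le_div_iff₀ hpi]
        exact hc
      have hkl' : (k:ℝ)*π ≤ (l:ℝ)*π := by
        have : (k:ℝ) ≤ l := by exact_mod_cast hkl
        nlinarith
      have h1 := intervalIntegral.integral_add_adjacent_intervals
        (Kper'_ii a ((k:ℝ)*π)) (Kper'_ii ((k:ℝ)*π) b)
      have h2 := intervalIntegral.integral_add_adjacent_intervals
        (Kper'_ii ((k:ℝ)*π) ((l:ℝ)*π)) (Kper'_ii ((l:ℝ)*π) b)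
      have e1 : ∫ t in a..((k:ℝ)*π), Kper' t = Kper ((k:ℝ)*π) - Kper a := by
        apply FTC_piece (k-1) _ _ _ hak
        · push_cast; linarith
        · push_cast; linarith
      have e2 := FTC_mult k l hkl
      have e3 : ∫ t in ((l:ℝ)*π)..b, Kper' t = Kper b - Kper ((l:ℝ)*π) := by
        apply FTC_piece l _ _ le_rfl hlb
        · push_cast; linarith
      rw [← h1, ← h2, e1, e2, e3]
      ring
    · push_neg at hc
      apply FTC_piece (k-1) _ _ _ hab
      · push_cast; linarith
      · push_cast; linarith
  rcases le_total a b with h | h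
  · exact main a b h
  · rw [intervalIntegral.integral_symm, main b a h]
    ring

end NeumannAux
namespace NeumannAux

lemma Kper'_formula (d : ℝ) (h1 : -(2*π) < d) (h2 : d < 2*π) (h0 : d ≠ 0) :
    Kper' d = d - π * Real.sign d := by
  unfold Kper'
  rcases lt_or_ge π d with hd | hd
  · rw [toIoc_shift d 1 (by push_cast; linarith) (by push_cast; linarith),
      Real.sign_of_neg (by push_cast; linarith), Real.sign_of_pos (by nlinarith [Real.pi_pos])]
    push_cast; ring
  rcases le_or_gt d (-π) with hd' | hd'
  · rw [toIoc_shift d (-1) (by push_cast; linarith) (by push_cast; linarith),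
      Real.sign_of_pos (by push_cast; nlinarith [Real.pi_pos]),
      Real.sign_of_neg (by nlinarith [Real.pi_pos])]
    push_cast; ring
  · rw [toIoc_self d hd' hd]

end NeumannAux

open NeumannAux

theorem neumann_convolution_properties (f : ℝ → ℝ)
    (hper : Function.Periodic f (2 * π)) (hf : IntegrableOn f (Icc (-π) π))
    (hmean : (∫ x in (-π)..π, f x) = 0) :
    (∀ x : ℝ,
      HasDerivAt (fun x : ℝ => (1 / (2 * π)) * ∫ y in (-π)..π, Kper (x - y) * f y)
        ((1 / (2 * π)) * ∫ y in (-π)..π, Kper' (x - y) * f y) x) ∧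
    Continuous (fun x : ℝ => (1 / (2 * π)) * ∫ y in (-π)..π, Kper' (x - y) * f y) ∧
    (∀ x ∈ Icc (-π) π,
      ((1 / (2 * π)) * ∫ y in (-π)..π, Kper' (x - y) * f y) -
        ((1 / (2 * π)) * ∫ y in (-π)..π, Kper' ((-π) - y) * f y) =
          -∫ t in (-π)..x, f t) ∧
    ((1 / (2 * π)) * ∫ y in (-π)..π, Kper' ((-π) - y) * f y) =
        -(1 / (2 * π)) * ∫ x in (-π)..π, x * f x ∧
    ((1 / (2 * π)) * ∫ y in (-π)..π, Kper' (π - y) * f y) =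
        -(1 / (2 * π)) * ∫ x in (-π)..π, x * f x ∧
    (∫ x in (-π)..π, (1 / (2 * π)) * ∫ y in (-π)..π, Kper (x - y) * f y) = 0 := by
  have hpi := Real.pi_pos
  have h2pi : (0:ℝ) < 2*π := Real.two_pi_pos
  have hππ : (-π : ℝ) ≤ π := by linarith
  -- f is interval integrable on every interval
  have hbase : IntervalIntegrable f volume (-π) π :=
    (intervalIntegrable_iff_integrableOn_Icc_of_le hππ).2 hf
  have hshift : ∀ (a b : ℝ) (k : ℤ), IntervalIntegrable f volume a b →
      IntervalIntegrable f volume (a + 2*π*k) (b + 2*π*k) := by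
    intro a b k h
    have h2 := h.comp_sub_right (2*π*k)
    have hfe : (fun x => f (x - 2*π*k)) = f := funext fun x => by
      have := hper.sub_int_mul_eq (x := x) (n := k)
      rwa [show (k:ℝ) * (2*π) = 2*π*k by ring] at this
    rwa [hfe] at h2
  have hbig : ∀ n : ℕ, IntervalIntegrable f volume (-π - 2*π*n) (π + 2*π*n) := by
    intro n
    induction n with
    | zero => simpa using hbase
    | succ n ih =>
      have left : IntervalIntegrable f volume (-π - 2*π*(n+1:ℕ)) (-π - 2*π*n) := by
        have h := hshift (-π) π (-(n+1)) hbase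
        have e1 : -π + 2*π*((-(n+1):ℤ):ℝ) = -π - 2*π*((n+1:ℕ):ℝ) := by push_cast; ring
        have e2 : π + 2*π*((-(n+1):ℤ):ℝ) = -π - 2*π*(n:ℝ) := by push_cast; ring
        rwa [e1, e2] at h
      have right : IntervalIntegrable f volume (π + 2*π*n) (π + 2*π*(n+1:ℕ)) := by
        have h := hshift (-π) π (n+1) hbase
        have e1 : -π + 2*π*(((n+1):ℤ):ℝ) = π + 2*π*(n:ℝ) := by push_cast; ring
        have e2 : π + 2*π*(((n+1):ℤ):ℝ) = π + 2*π*((n+1:ℕ):ℝ) := by push_cast; ring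
        rwa [e1, e2] at h
      exact (left.trans ih).trans right
  have hfint : ∀ a b : ℝ, IntervalIntegrable f volume a b := by
    intro a b
    obtain ⟨n, hn⟩ := exists_nat_ge ((|a| + |b|)/(2*π))
    have hn' : |a| + |b| ≤ 2*π*n := by rw [div_le_iff₀ h2pi] at hn; linarith
    apply (hbig n).mono_set
    have habs := abs_nonneg a
    have habs' := abs_nonneg b
    have h1 := le_abs_self a
    have h2 := neg_abs_le a
    have h3 := le_abs_self b
    have h4 := neg_abs_le b
    apply uIcc_subset_uIcc <;>
      rw [mem_uIcc] <;> left <;> constructor <;> linarith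
  have hfI : IntegrableOn f (Ioc (-π) π) := hf.mono_set Ioc_subset_Icc_self
  -- bounded kernel times f is interval integrable
  have hker : ∀ (g : ℝ → ℝ) (C : ℝ), Measurable g → (∀ z, |g z| ≤ C) → ∀ (s c d : ℝ),
      IntervalIntegrable (fun y => g (s - y) * f y) volume c d := by
    intro g C hg hC s c d
    rw [intervalIntegrable_iff]
    exact (intervalIntegrable_iff.1 (hfint c d)).bdd_mul
      (hg.comp (measurable_const.sub measurable_id)).aestronglyMeasurable
      (Filter.Eventually.of_forall fun y => by rw [Real.norm_eq_abs]; exact hC _)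
  -- product integrability for Fubini
  have hprod : ∀ (g : ℝ → ℝ) (C : ℝ), Measurable g → (∀ z, |g z| ≤ C) → ∀ (a b : ℝ),
      Integrable (Function.uncurry fun t y => g (t - y) * f y)
        ((volume.restrict (Ioc a b)).prod (volume.restrict (Ioc (-π) π))) := by
    intro g C hg hC a b
    rw [show (Function.uncurry fun t y => g (t - y) * f y)
        = fun p : ℝ × ℝ => g (p.1 - p.2) * f p.2 from rfl]
    have h1 : AEStronglyMeasurable (fun p : ℝ × ℝ => g (p.1 - p.2))
        ((volume.restrict (Ioc a b)).prod (volume.restrict (Ioc (-π) π))) :=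
      (hg.comp (measurable_fst.sub measurable_snd)).aestronglyMeasurable
    have h2 : AEStronglyMeasurable (fun p : ℝ × ℝ => f p.2)
        ((volume.restrict (Ioc a b)).prod (volume.restrict (Ioc (-π) π))) :=
      hfI.aestronglyMeasurable.comp_snd
    have hconst : Integrable (fun _ : ℝ => C) (volume.restrict (Ioc a b)) :=
      integrableOn_const measure_Ioc_lt_top.ne
    have hdom : Integrable (fun p : ℝ × ℝ => C * |f p.2|)
        ((volume.restrict (Ioc a b)).prod (volume.restrict (Ioc (-π) π))) :=
      Integrable.mul_prod hconst hfI.abs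
    apply hdom.mono' (h1.mul h2)
    refine Filter.Eventually.of_forall fun p => ?_
    simp only [Pi.mul_apply, Real.norm_eq_abs, abs_mul]
    exact mul_le_mul_of_nonneg_right (hC _) (abs_nonneg _)
  -- raw value of u'(-π)
  have hrawC4 : (∫ y in (-π)..π, Kper' ((-π) - y) * f y) = -∫ x in (-π)..π, x * f x := by
    rw [← intervalIntegral.integral_neg]
    apply intervalIntegral.integral_congr_ae
    filter_upwards [ae_ne (π:ℝ)] with y hyπ hy
    rw [uIoc_of_le hππ] at hy
    have hy2 : y < π := lt_of_le_of_ne hy.2 hyπ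
    have hy1 : -π < y := hy.1
    have hKe : Kper' (-π - y) = -y := by
      rw [Kper'_formula _ (by linarith) (by linarith) (by intro h; apply absurd h; linarith),
        Real.sign_of_neg (by linarith)]
      ring
    rw [hKe]; ring
  have hC5eq : ∀ y : ℝ, Kper' (π - y) = Kper' (-π - y) := fun y => by
    have h := Kper'_periodic (-π - y)
    rwa [show -π - y + 2*π = π - y by ring] at h
  -- the sign integral
  have hsign_int : ∀ x ∈ Icc (-π) π,
      (∫ y in (-π)..π, Real.sign (x - y) * f y) = 2 * ∫ t in (-π)..x, f t := by
    intro x hx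
    obtain ⟨hx1, hx2⟩ := hx
    have hii1 := hker Real.sign 1 measurable_sign abs_sign_le x (-π) x
    have hii2 := hker Real.sign 1 measurable_sign abs_sign_le x x π
    have hsplit := intervalIntegral.integral_add_adjacent_intervals hii1 hii2
    have e1 : ∫ y in (-π)..x, Real.sign (x - y) * f y = ∫ t in (-π)..x, f t := by
      apply intervalIntegral.integral_congr_ae
      filter_upwards [ae_ne x] with y hyx hy
      rw [uIoc_of_le hx1] at hy
      rw [Real.sign_of_pos (sub_pos.2 (lt_of_le_of_ne hy.2 hyx)), one_mul]
    have e2 : ∫ y in x..π, Real.sign (x - y) * f y = -∫ t in x..π, f t := by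
      rw [← intervalIntegral.integral_neg]
      apply intervalIntegral.integral_congr_ae
      refine Filter.Eventually.of_forall fun y hy => ?_
      rw [uIoc_of_le hx2] at hy
      rw [Real.sign_of_neg (sub_neg.2 hy.1)]
      ring
    have e3 : ∫ t in x..π, f t = -∫ t in (-π)..x, f t := by
      have h := intervalIntegral.integral_add_adjacent_intervals (hfint (-π) x) (hfint x π)
      rw [hmean] at h
      linarith
    rw [← hsplit, e1, e2, e3]
    ring
  -- the key identity for u'
  have hC3raw : ∀ x ∈ Icc (-π) π,
      (∫ y in (-π)..π, Kper' (x - y) * f y) - (∫ y in (-π)..π, Kper' ((-π) - y) * f y)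
        = -(2*π) * ∫ t in (-π)..x, f t := by
    intro x hx
    obtain ⟨hx1, hx2⟩ := hx
    have hii1 := hker Kper' (2*π) measurable_Kper' Kper'_bound x (-π) π
    have hii2 := hker Kper' (2*π) measurable_Kper' Kper'_bound (-π) (-π) π
    rw [← intervalIntegral.integral_sub hii1 hii2]
    have emain : (∫ y in (-π)..π, (Kper' (x - y) * f y - Kper' (-π - y) * f y))
        = ∫ y in (-π)..π, (x * f y - π * (Real.sign (x - y) * f y)) := by
      apply intervalIntegral.integral_congr_ae
      filter_upwards [ae_ne (π:ℝ), ae_ne x] with y hyπ hyx hy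
      rw [uIoc_of_le hππ] at hy
      have hy2 : y < π := lt_of_le_of_ne hy.2 hyπ
      have hy1 : -π < y := hy.1
      have hx_y : Kper' (x - y) = (x - y) - π * Real.sign (x - y) :=
        Kper'_formula _ (by linarith) (by linarith) (sub_ne_zero.2 (Ne.symm hyx))
      have hKe : Kper' (-π - y) = -y := by
        rw [Kper'_formula _ (by linarith) (by linarith) (by intro h; apply absurd h; linarith),
          Real.sign_of_neg (by linarith)]
        ring
      rw [hx_y, hKe]
      ring
    rw [emain, intervalIntegral.integral_sub ((hfint (-π) π).const_mul x)
      ((hker Real.sign 1 measurable_sign abs_sign_le x (-π) π).const_mul π),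
      intervalIntegral.integral_const_mul, intervalIntegral.integral_const_mul, hmean,
      hsign_int x ⟨hx1, hx2⟩]
    ring
  -- periodicity of v and the formula v = const - 2π F
  set F : ℝ → ℝ := fun x => ∫ t in (-π)..x, f t with hF
  have hFcont : Continuous F := intervalIntegral.continuous_primitive hfint (-π)
  have hFper : Function.Periodic F (2*π) := by
    intro x
    have h1 := intervalIntegral.integral_add_adjacent_intervals (hfint (-π) x) (hfint x (x + 2*π))
    have h2 := hper.intervalIntegral_add_eq x (-π)
    rw [show -π + 2*π = π by ring] at h2
    simp only [hF]
    rw [← h1, h2, hmean, add_zero]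
  have hvsub : ∀ (x : ℝ) (k : ℤ), (∫ y in (-π)..π, Kper' ((x - 2*π*k) - y) * f y)
      = ∫ y in (-π)..π, Kper' (x - y) * f y := by
    intro x k
    apply intervalIntegral.integral_congr
    intro y _
    simp only []
    have h := Kper'_periodic.sub_int_mul_eq (x := x - y) (n := k)
    rw [show x - 2*π*(k:ℝ) - y = x - y - k * (2*π) by ring, h]
  have hveq' : ∀ x : ℝ, (∫ y in (-π)..π, Kper' (x - y) * f y)
      = (∫ y in (-π)..π, Kper' ((-π) - y) * f y) - (2*π) * F x := by
    intro x
    obtain ⟨hm1, hm2⟩ := mem_Ioc' x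
    set n : ℤ := toIocDiv Real.two_pi_pos (-π) x with hn
    have hxr : toIocMod Real.two_pi_pos (-π) x = x - 2*π*n := by
      rw [toIocMod, hn]; push_cast [zsmul_eq_mul]; ring
    set r : ℝ := x - 2*π*n with hrdef
    rw [hxr] at hm1 hm2
    have hbase := hC3raw r ⟨hm1.le, hm2⟩
    have hFr : F r = F x := by
      have h := hFper.sub_int_mul_eq (x := x) (n := n)
      rw [hrdef, show x - 2*π*n = x - n * (2*π) by ring]
      exact h
    have hvr := hvsub x n
    rw [← hrdef] at hvr
    rw [← hvr, ← hFr]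
    linarith [hbase]
  have hveqf : (fun x : ℝ => ∫ y in (-π)..π, Kper' (x - y) * f y)
      = (fun x : ℝ => (∫ y in (-π)..π, Kper' ((-π) - y) * f y) - (2*π) * F x) :=
    funext hveq'
  have hvcont : Continuous (fun x : ℝ => ∫ y in (-π)..π, Kper' (x - y) * f y) := by
    rw [hveqf]
    exact continuous_const.sub (continuous_const.mul hFcont)
  -- Fubini identity for the primitive
  have hGsub : ∀ a b : ℝ, a ≤ b →
      (∫ y in (-π)..π, Kper (b - y) * f y) - (∫ y in (-π)..π, Kper (a - y) * f y)
        = ∫ t in a..b, ∫ y in (-π)..π, Kper' (t - y) * f y := by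
    intro a b hab
    have hswap := MeasureTheory.integral_integral_swap
      (hprod Kper' (2*π) measurable_Kper' Kper'_bound a b)
    have hinner : ∀ y : ℝ, (∫ t in Ioc a b, Kper' (t - y) * f y)
        = (Kper (b - y) - Kper (a - y)) * f y := by
      intro y
      rw [← intervalIntegral.integral_of_le hab, intervalIntegral.integral_mul_const,
        intervalIntegral.integral_comp_sub_right, FTC_full]
    calc (∫ y in (-π)..π, Kper (b - y) * f y) - (∫ y in (-π)..π, Kper (a - y) * f y)
        = ∫ y in (-π)..π, (Kper (b - y) - Kper (a - y)) * f y := by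
          rw [← intervalIntegral.integral_sub (hker Kper (2*π^2) measurable_Kper Kper_bound b (-π) π)
            (hker Kper (2*π^2) measurable_Kper Kper_bound a (-π) π)]
          apply intervalIntegral.integral_congr
          intro y _
          simp only []
          ring
      _ = ∫ y in Ioc (-π) π, (Kper (b - y) - Kper (a - y)) * f y := intervalIntegral.integral_of_le hππ
      _ = ∫ y in Ioc (-π) π, ∫ t in Ioc a b, Kper' (t - y) * f y := by simp only [hinner]
      _ = ∫ t in Ioc a b, ∫ y in Ioc (-π) π, Kper' (t - y) * f y := hswap.symm
      _ = ∫ t in a..b, ∫ y in (-π)..π, Kper' (t - y) * f y := by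
          rw [← intervalIntegral.integral_of_le hab]
          apply intervalIntegral.integral_congr
          intro t _
          simp only []
          rw [intervalIntegral.integral_of_le hππ]
  have hGsub' : ∀ a b : ℝ,
      (∫ y in (-π)..π, Kper (b - y) * f y) - (∫ y in (-π)..π, Kper (a - y) * f y)
        = ∫ t in a..b, ∫ y in (-π)..π, Kper' (t - y) * f y := by
    intro a b
    rcases le_total a b with h | h
    · exact hGsub a b h
    · rw [intervalIntegral.integral_symm b a, ← hGsub b a h]
      ring
  -- conjunct 1
  have hC1 : ∀ x : ℝ,
      HasDerivAt (fun x : ℝ => (1 / (2 * π)) * ∫ y in (-π)..π, Kper (x - y) * f y)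
        ((1 / (2 * π)) * ∫ y in (-π)..π, Kper' (x - y) * f y) x := by
    intro x
    have hprim : HasDerivAt (fun u : ℝ => ∫ t in (-π)..u, (∫ y in (-π)..π, Kper' (t - y) * f y))
        (∫ y in (-π)..π, Kper' (x - y) * f y) x :=
      intervalIntegral.integral_hasDerivAt_right (hvcont.intervalIntegrable _ _)
        ⟨univ, Filter.univ_mem, hvcont.aestronglyMeasurable.restrict⟩ hvcont.continuousAt
    have heq : (fun u : ℝ => (1 / (2 * π)) * ∫ y in (-π)..π, Kper (u - y) * f y)
        = fun u : ℝ => (1 / (2 * π)) * ((∫ y in (-π)..π, Kper ((-π) - y) * f y)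
            + ∫ t in (-π)..u, (∫ y in (-π)..π, Kper' (t - y) * f y)) := by
      funext u
      have h := hGsub' (-π) u
      congr 1
      linarith
    rw [heq]
    have hd := ((hasDerivAt_const x (∫ y in (-π)..π, Kper ((-π) - y) * f y)).add hprim).const_mul
      (1 / (2 * π))
    refine hd.congr_deriv ?_
    ring
  refine ⟨hC1, ?_, ?_, ?_, ?_, ?_⟩
  · -- conjunct 2
    exact continuous_const.mul hvcont
  · -- conjunct 3
    intro x hx
    rw [← mul_sub, hC3raw x hx]
    have hne : (π:ℝ) ≠ 0 := Real.pi_ne_zero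
    field_simp
  · -- conjunct 4
    rw [hrawC4]; ring
  · -- conjunct 5
    simp only [hC5eq]
    rw [hrawC4]; ring
  · -- conjunct 6
    have hinner0 : ∀ y : ℝ, (∫ x in (-π)..π, Kper (x - y)) = 0 := by
      intro y
      rw [intervalIntegral.integral_comp_sub_right]
      have hshiftK := Kper_periodic.intervalIntegral_add_eq (-π - y) (-π)
      rw [show -π - y + 2*π = π - y by ring, show -π + 2*π = π by ring] at hshiftK
      rw [hshiftK]
      have hsplit := intervalIntegral.integral_add_adjacent_intervals (Kper_ii (-π) 0) (Kper_ii 0 π)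
      have hleft : ∫ x in (-π)..(0:ℝ), Kper x = 0 := by
        have hcongr : ∫ x in (-π)..(0:ℝ), Kper x
            = ∫ x in (-π)..(0:ℝ), ((1/2)*x^2 + π*x + π^2/3) := by
          apply intervalIntegral.integral_congr_ae
          refine Filter.Eventually.of_forall fun x hx => ?_
          rw [uIoc_of_le (by linarith : (-π:ℝ) ≤ 0)] at hx
          unfold Kper
          rw [toIoc_self x hx.1 (by linarith [hx.2]), abs_of_nonpos hx.2]
          ring
        rw [hcongr]
        have hP : ∀ x ∈ uIcc (-π) (0:ℝ),
            HasDerivAt (fun x : ℝ => (1/6)*x^3 + π*(x^2/2) + (π^2/3)*x)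
              ((1/2)*x^2 + π*x + π^2/3) x := by
          intro x _
          have h₁ := ((hasDerivAt_pow 3 x).const_mul (1/6:ℝ)).add
            (((hasDerivAt_pow 2 x).div_const 2).const_mul π)
          have h₂ := h₁.add ((hasDerivAt_id x).const_mul (π^2/3))
          refine h₂.congr_deriv ?_
          push_cast; ring
        rw [intervalIntegral.integral_eq_sub_of_hasDerivAt hP
          ((by fun_prop : Continuous fun x : ℝ => (1/2)*x^2 + π*x + π^2/3).intervalIntegrable _ _)]
        ring
      have hright : ∫ x in (0:ℝ)..π, Kper x = 0 := by
        have hcongr : ∫ x in (0:ℝ)..π, Kper x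
            = ∫ x in (0:ℝ)..π, ((1/2)*x^2 - π*x + π^2/3) := by
          apply intervalIntegral.integral_congr_ae
          refine Filter.Eventually.of_forall fun x hx => ?_
          rw [uIoc_of_le (by linarith : (0:ℝ) ≤ π)] at hx
          unfold Kper
          rw [toIoc_self x (by linarith [hx.1]) hx.2, abs_of_pos hx.1]
        rw [hcongr]
        have hP : ∀ x ∈ uIcc (0:ℝ) π,
            HasDerivAt (fun x : ℝ => (1/6)*x^3 - π*(x^2/2) + (π^2/3)*x)
              ((1/2)*x^2 - π*x + π^2/3) x := by
          intro x _
          have h₁ := ((hasDerivAt_pow 3 x).const_mul (1/6:ℝ)).sub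
            (((hasDerivAt_pow 2 x).div_const 2).const_mul π)
          have h₂ := h₁.add ((hasDerivAt_id x).const_mul (π^2/3))
          refine h₂.congr_deriv ?_
          push_cast; ring
        rw [intervalIntegral.integral_eq_sub_of_hasDerivAt hP
          ((by fun_prop : Continuous fun x : ℝ => (1/2)*x^2 - π*x + π^2/3).intervalIntegrable _ _)]
        ring
      rw [← hsplit, hleft, hright, add_zero]
    have hswap := MeasureTheory.integral_integral_swap
      (hprod Kper (2*π^2) measurable_Kper Kper_bound (-π) π)
    have hinner' : ∀ y : ℝ, (∫ x in Ioc (-π) π, Kper (x - y) * f y) = 0 := by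
      intro y
      rw [← intervalIntegral.integral_of_le hππ, intervalIntegral.integral_mul_const,
        hinner0 y, zero_mul]
    calc (∫ x in (-π)..π, (1 / (2 * π)) * ∫ y in (-π)..π, Kper (x - y) * f y)
        = (1 / (2 * π)) * ∫ x in (-π)..π, ∫ y in (-π)..π, Kper (x - y) * f y :=
          intervalIntegral.integral_const_mul _ _
      _ = (1 / (2 * π)) * ∫ x in Ioc (-π) π, ∫ y in Ioc (-π) π, Kper (x - y) * f y := by
          rw [intervalIntegral.integral_of_le hππ]
          congr 1
          apply setIntegral_congr_fun measurableSet_Ioc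
          intro x _
          simp only []
          rw [intervalIntegral.integral_of_le hππ]
      _ = (1 / (2 * π)) * ∫ y in Ioc (-π) π, ∫ x in Ioc (-π) π, Kper (x - y) * f y := by
          rw [hswap]
      _ = 0 := by
          simp only [hinner']
          simp
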